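/- For k > 0 define Ĉ(k,c) = 1 - ∫₀^c (2k / Y_BS(k,u)²) du for 0 < c < 1. Then Ĉ(k,c) > 0 and Y_BS(k,c) = 2k / Y_BS(k, Ĉ(k,c)). -/

import Mathlib

open MeasureTheory Real Filter Asymptotics Set
open scoped Topology

/-- Standard normal density. -/
noncomputable def phi (z : ℝ) : ℝ := (Real.sqrt (2 * Real.pi))⁻¹ * Real.exp (-z ^ 2 / 2)

/-- Standard normal CDF. -/
noncomputable def Phi (x : ℝ) : ℝ := ∫ z in Set.Iic x, phi z

/-- Black–Scholes normalized call price. -/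
noncomputable def CBS (k y : ℝ) : ℝ :=
  if 0 < y then Phi (-k / y + y / 2) - Real.exp k * Phi (-k / y - y / 2)
  else max (1 - Real.exp k) 0

/-- Implied total standard deviation: inverse of `CBS k` on `[0,∞)`. -/
noncomputable def YBS (k c : ℝ) : ℝ := sInf {y : ℝ | 0 ≤ y ∧ CBS k y = c}

/-- Inverse of the standard normal CDF on (0,1). -/
noncomputable def PhiInv (u : ℝ) : ℝ := sInf {x : ℝ | u ≤ Phi x}

/-- Extended-real quantile with the convention `Φ⁻¹(u) = +∞` for `u ≥ 1`, `-∞` for `u ≤ 0`. -/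
noncomputable def PhiInvE (u : ℝ) : EReal :=
  if 1 ≤ u then ⊤ else if u ≤ 0 then ⊥ else ((PhiInv u : ℝ) : EReal)

lemma phi_pos (z : ℝ) : 0 < phi z :=
  mul_pos (inv_pos.2 (Real.sqrt_pos.2 (by positivity))) (Real.exp_pos _)

lemma phi_neg (z : ℝ) : phi (-z) = phi z := by simp [phi, neg_pow]

lemma continuous_phi : Continuous phi := by
  unfold phi; fun_prop

lemma integrable_phi : Integrable phi := by
  have h : Integrable (fun z : ℝ => Real.exp (-(1/2) * z ^ 2)) :=
    integrable_exp_neg_mul_sq (by norm_num)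
  have h2 : phi = fun z => (Real.sqrt (2 * Real.pi))⁻¹ * Real.exp (-(1/2) * z ^ 2) := by
    funext z; unfold phi; congr 1; ring
  rw [h2]; exact h.const_mul _

lemma integral_phi : ∫ z, phi z = 1 := by
  have h : ∫ x : ℝ, Real.exp (-(1/2) * x ^ 2) = Real.sqrt (Real.pi / (1/2)) :=
    integral_gaussian (1/2 : ℝ)
  have h2 : ∫ z : ℝ, Real.exp (-z ^ 2 / 2) = Real.sqrt (2 * Real.pi) := by
    rw [show (fun z : ℝ => Real.exp (-z ^ 2 / 2)) = fun z : ℝ => Real.exp (-(1/2) * z ^ 2) by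
      funext z; ring_nf, h, show Real.pi / (1/2) = 2 * Real.pi by ring]
  unfold phi
  rw [MeasureTheory.integral_const_mul, h2,
    inv_mul_cancel₀ (ne_of_gt (Real.sqrt_pos.2 (by positivity)))]

lemma Phi_le_one (x : ℝ) : Phi x ≤ 1 := by
  rw [← integral_phi]
  exact setIntegral_le_integral integrable_phi
    (Filter.Eventually.of_forall fun z => (phi_pos z).le)

lemma Phi_hasDerivAt (x : ℝ) : HasDerivAt Phi (phi x) x := by
  have key : ∀ y : ℝ, Phi y = Phi 0 + ∫ t in (0:ℝ)..y, phi t := by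
    intro y
    unfold Phi
    rw [← intervalIntegral.integral_Iic_sub_Iic integrable_phi.integrableOn
      integrable_phi.integrableOn]
    ring
  have hd : HasDerivAt (fun y => Phi 0 + ∫ t in (0:ℝ)..y, phi t) (phi x) x := by
    refine HasDerivAt.const_add _ ?_
    exact intervalIntegral.integral_hasDerivAt_right
      (integrable_phi.intervalIntegrable)
      continuous_phi.stronglyMeasurable.stronglyMeasurableAtFilter
      continuous_phi.continuousAt
  exact hd.congr_of_eventuallyEq (Filter.Eventually.of_forall key)

lemma Phi_tendsto_one : Tendsto Phi atTop (𝓝 1) := by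
  have hc : AECover (volume : Measure ℝ) atTop (fun x : ℝ => Iic x) :=
    aecover_Iic tendsto_id
  have := hc.integral_tendsto_of_countably_generated integrable_phi
  rwa [integral_phi] at this

lemma Phi_neg_eq (x : ℝ) : Phi (-x) = 1 - Phi x := by
  have h1 : Phi (-x) = ∫ z in Ioi x, phi z := by
    rw [show Phi (-x) = ∫ z in Iic (-x), phi z from rfl]
    rw [show (∫ z in Iic (-x), phi z) = ∫ z in Iic (-x), phi (-z) by
      exact setIntegral_congr_fun measurableSet_Iic fun z _ => (phi_neg z).symm]
    rw [integral_comp_neg_Iic, neg_neg]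
  have h2 : Phi x + ∫ z in Ioi x, phi z = 1 := by
    rw [← integral_phi]
    have := MeasureTheory.integral_add_compl (measurableSet_Iic (a := x)) integrable_phi
    rwa [compl_Iic] at this
  linarith

lemma Phi_strictMono : StrictMono Phi := by
  intro a b hab
  have key : Phi b - Phi a = ∫ t in a..b, phi t := by
    unfold Phi
    rw [← intervalIntegral.integral_Iic_sub_Iic integrable_phi.integrableOn
      integrable_phi.integrableOn]
  have hpos : 0 < ∫ t in a..b, phi t :=
    intervalIntegral.intervalIntegral_pos_of_pos
      (integrable_phi.intervalIntegrable) (fun x => phi_pos x) hab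
  linarith

lemma Phi_tendsto_zero : Tendsto Phi atBot (𝓝 0) := by
  have h : Tendsto (fun x => 1 - Phi (-x)) atBot (𝓝 0) := by
    have : Tendsto (fun x : ℝ => Phi (-x)) atBot (𝓝 1) :=
      Phi_tendsto_one.comp tendsto_neg_atBot_atTop
    have := this.const_sub 1
    simpa using this
  refine h.congr fun x => ?_
  rw [Phi_neg_eq]; ring

lemma Phi_lt_one (x : ℝ) : Phi x < 1 :=
  lt_of_lt_of_le (Phi_strictMono (lt_add_one x)) (Phi_le_one _)

lemma Phi_pos (x : ℝ) : 0 < Phi x := by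
  have := Phi_lt_one (-x)
  rw [Phi_neg_eq] at this; linarith

/-! ### CBS section -/

noncomputable def FBS (k y : ℝ) : ℝ :=
  Phi (-k / y + y / 2) - Real.exp k * Phi (-k / y - y / 2)

lemma CBS_of_pos {k y : ℝ} (hy : 0 < y) : CBS k y = FBS k y := by
  simp [CBS, FBS, hy]

lemma CBS_zero {k : ℝ} (hk : 0 < k) : CBS k 0 = 0 := by
  simp only [CBS, lt_irrefl, if_false]
  have : 1 - Real.exp k ≤ 0 := by
    have := Real.one_le_exp hk.le
    linarith
  exact max_eq_right this

lemma exp_mul_phi {k y : ℝ} (hy : 0 < y) :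
    Real.exp k * phi (-k / y - y / 2) = phi (-k / y + y / 2) := by
  unfold phi
  rw [mul_comm (Real.exp k), mul_assoc, ← Real.exp_add]
  congr 2
  field_simp
  ring

lemma FBS_hasDerivAt {k y : ℝ} (hy : 0 < y) :
    HasDerivAt (FBS k) (phi (-k / y + y / 2)) y := by
  have hy' : y ≠ 0 := ne_of_gt hy
  have hinv : HasDerivAt (fun y : ℝ => -k / y) (k / y ^ 2) y := by
    have h := (hasDerivAt_inv hy').const_mul (-k)
    have h2 : HasDerivAt (fun y : ℝ => -k / y) (-k * -(y ^ 2)⁻¹) y := by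
      refine h.congr_of_eventuallyEq (Filter.Eventually.of_forall fun z => ?_)
      simp [div_eq_mul_inv]
    convert h2 using 1
    field_simp
  have h1 : HasDerivAt (fun y : ℝ => -k / y + y / 2) (k / y ^ 2 + 1 / 2) y :=
    hinv.add ((hasDerivAt_id y).div_const 2)
  have h2 : HasDerivAt (fun y : ℝ => -k / y - y / 2) (k / y ^ 2 - 1 / 2) y :=
    hinv.sub ((hasDerivAt_id y).div_const 2)
  have H1 : HasDerivAt (fun y : ℝ => Phi (-k / y + y / 2))
      (phi (-k / y + y / 2) * (k / y ^ 2 + 1 / 2)) y := by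
    simpa [Function.comp_def] using (Phi_hasDerivAt (-k / y + y / 2)).comp y h1
  have H2 : HasDerivAt (fun y : ℝ => Real.exp k * Phi (-k / y - y / 2))
      (Real.exp k * (phi (-k / y - y / 2) * (k / y ^ 2 - 1 / 2))) y := by
    have := ((Phi_hasDerivAt (-k / y - y / 2)).comp y h2).const_mul (Real.exp k)
    simpa [Function.comp] using this
  have H := H1.sub H2
  have hval : phi (-k / y + y / 2) * (k / y ^ 2 + 1 / 2) -
      Real.exp k * (phi (-k / y - y / 2) * (k / y ^ 2 - 1 / 2)) = phi (-k / y + y / 2) := by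
    rw [show Real.exp k * (phi (-k / y - y / 2) * (k / y ^ 2 - 1 / 2)) =
      (Real.exp k * phi (-k / y - y / 2)) * (k / y ^ 2 - 1 / 2) by ring,
      exp_mul_phi hy]
    ring
  rw [hval] at H
  exact H

lemma CBS_hasDerivAt {k y : ℝ} (hy : 0 < y) :
    HasDerivAt (CBS k) (phi (-k / y + y / 2)) y := by
  refine (FBS_hasDerivAt hy).congr_of_eventuallyEq ?_
  filter_upwards [isOpen_Ioi.mem_nhds hy] with z hz
  exact CBS_of_pos hz

lemma CBS_continuousOn (k : ℝ) : ContinuousOn (CBS k) (Ioi 0) := fun y hy =>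
  ((CBS_hasDerivAt hy).continuousAt).continuousWithinAt

lemma CBS_strictMonoOn (k : ℝ) : StrictMonoOn (CBS k) (Ioi 0) := by
  refine strictMonoOn_of_hasDerivWithinAt_pos (f' := fun x => phi (-k / x + x / 2))
    (convex_Ioi 0) (CBS_continuousOn k) (fun x hx => ?_) (fun x hx => ?_)
  · rw [interior_Ioi] at hx
    exact (CBS_hasDerivAt hx).hasDerivWithinAt
  · exact phi_pos _

lemma CBS_tendsto_zero {k : ℝ} (hk : 0 < k) :
    Tendsto (CBS k) (𝓝[>] (0:ℝ)) (𝓝 0) := by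
  have hinv : Tendsto (fun y : ℝ => y⁻¹) (𝓝[>] (0:ℝ)) atTop := tendsto_inv_nhdsGT_zero
  have hd : Tendsto (fun y : ℝ => -k / y) (𝓝[>] (0:ℝ)) atBot := by
    have h2 : Tendsto (fun y : ℝ => k * y⁻¹) (𝓝[>] (0:ℝ)) atTop := hinv.const_mul_atTop hk
    have h3 := tendsto_neg_atTop_atBot.comp h2
    refine h3.congr fun y => ?_
    simp [Function.comp, div_eq_mul_inv]
  have hy2 : Tendsto (fun y : ℝ => y / 2) (𝓝[>] (0:ℝ)) (𝓝 0) := by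
    have : Tendsto (fun y : ℝ => y / 2) (𝓝 (0:ℝ)) (𝓝 0) := by
      simpa using ((tendsto_id : Tendsto id (𝓝 (0:ℝ)) (𝓝 0)).div_const 2)
    exact this.mono_left nhdsWithin_le_nhds
  have hd1 : Tendsto (fun y : ℝ => -k / y + y / 2) (𝓝[>] (0:ℝ)) atBot :=
    hd.atBot_add hy2
  have hd2 : Tendsto (fun y : ℝ => -k / y - y / 2) (𝓝[>] (0:ℝ)) atBot := by
    have := hd.atBot_add hy2.neg
    refine this.congr fun y => by ring
  have h1 : Tendsto (fun y : ℝ => Phi (-k / y + y / 2)) (𝓝[>] (0:ℝ)) (𝓝 0) :=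
    Phi_tendsto_zero.comp hd1
  have h2 : Tendsto (fun y : ℝ => Phi (-k / y - y / 2)) (𝓝[>] (0:ℝ)) (𝓝 0) :=
    Phi_tendsto_zero.comp hd2
  have : Tendsto (FBS k) (𝓝[>] (0:ℝ)) (𝓝 (0 - Real.exp k * 0)) :=
    h1.sub ((h2.const_mul (Real.exp k)))
  simp only [mul_zero, sub_zero] at this
  refine this.congr' ?_
  filter_upwards [self_mem_nhdsWithin] with y hy
  exact (CBS_of_pos hy).symm

lemma CBS_tendsto_one {k : ℝ} (hk : 0 < k) :
    Tendsto (CBS k) atTop (𝓝 1) := by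
  have hd1 : Tendsto (fun y : ℝ => -k / y + y / 2) atTop atTop := by
    have h1 : Tendsto (fun y : ℝ => -k / y) atTop (𝓝 0) :=
      tendsto_const_nhds.div_atTop tendsto_id
    have h2 : Tendsto (fun y : ℝ => y / 2) atTop atTop :=
      tendsto_id.atTop_div_const (by norm_num)
    exact h1.add_atTop h2
  have hd2 : Tendsto (fun y : ℝ => -k / y - y / 2) atTop atBot := by
    have h1 : Tendsto (fun y : ℝ => -k / y) atTop (𝓝 0) :=
      tendsto_const_nhds.div_atTop tendsto_id
    have h2 : Tendsto (fun y : ℝ => -(y / 2)) atTop atBot := by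
      have h3 : Tendsto (fun y : ℝ => y / 2) atTop atTop :=
        tendsto_id.atTop_div_const (by norm_num)
      exact tendsto_neg_atTop_atBot.comp h3
    have := h1.add_atBot h2
    refine this.congr fun y => by ring
  have h1 : Tendsto (fun y : ℝ => Phi (-k / y + y / 2)) atTop (𝓝 1) :=
    Phi_tendsto_one.comp hd1
  have h2 : Tendsto (fun y : ℝ => Phi (-k / y - y / 2)) atTop (𝓝 0) :=
    Phi_tendsto_zero.comp hd2
  have : Tendsto (FBS k) atTop (𝓝 (1 - Real.exp k * 0)) :=
    h1.sub (h2.const_mul (Real.exp k))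
  simp only [mul_zero, sub_zero] at this
  refine this.congr' ?_
  filter_upwards [eventually_gt_atTop 0] with y hy
  exact (CBS_of_pos hy).symm

lemma CBS_pos {k y : ℝ} (hk : 0 < k) (hy : 0 < y) : 0 < CBS k y := by
  have h0 : 0 ≤ CBS k (y / 2) := by
    refine le_of_tendsto (CBS_tendsto_zero hk) ?_
    filter_upwards [Ioo_mem_nhdsGT_of_mem (left_mem_Ico.2 (half_pos hy))] with a ha
    exact (CBS_strictMonoOn k ha.1 (half_pos hy) ha.2).le
  exact lt_of_le_of_lt h0 (CBS_strictMonoOn k (half_pos hy) hy (half_lt_self hy))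

lemma CBS_lt_one {k y : ℝ} (hk : 0 < k) (hy : 0 < y) : CBS k y < 1 := by
  have h1 : CBS k (y + 1) ≤ 1 := by
    refine ge_of_tendsto (CBS_tendsto_one hk) ?_
    filter_upwards [eventually_gt_atTop (y + 1)] with a ha
    have hy1 : (0:ℝ) < y + 1 := by linarith
    exact (CBS_strictMonoOn k hy1 (lt_trans hy1 ha) ha).le
  exact lt_of_lt_of_le (CBS_strictMonoOn k hy (mem_Ioi.2 (by linarith)) (by linarith)) h1

/-! ### YBS section -/

lemma YBS_CBS {k y : ℝ} (hk : 0 < k) (hy : 0 < y) : YBS k (CBS k y) = y := by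
  have hset : {y' : ℝ | 0 ≤ y' ∧ CBS k y' = CBS k y} = {y} := by
    ext y'
    simp only [mem_setOf_eq, mem_singleton_iff]
    constructor
    · rintro ⟨h0, he⟩
      rcases eq_or_lt_of_le h0 with h | h
      · exfalso
        rw [← h, CBS_zero hk] at he
        exact absurd he.symm (ne_of_gt (CBS_pos hk hy))
      · exact (CBS_strictMonoOn k).injOn h hy he
    · rintro rfl; exact ⟨hy.le, rfl⟩
  rw [YBS, hset, csInf_singleton]

lemma YBS_exists {k c : ℝ} (hk : 0 < k) (hc0 : 0 < c) (hc1 : c < 1) :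
    ∃ y : ℝ, 0 < y ∧ CBS k y = c := by
  obtain ⟨a, ha0, hac⟩ : ∃ a : ℝ, 0 < a ∧ CBS k a < c := by
    have := (CBS_tendsto_zero hk).eventually (eventually_lt_nhds hc0)
    rcases (this.and self_mem_nhdsWithin).exists with ⟨a, h1, h2⟩
    exact ⟨a, h2, h1⟩
  obtain ⟨b, hab, hbc⟩ : ∃ b : ℝ, a < b ∧ c < CBS k b := by
    have := (CBS_tendsto_one hk).eventually (eventually_gt_nhds hc1)
    rcases (this.and (eventually_gt_atTop a)).exists with ⟨b, h1, h2⟩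
    exact ⟨b, h2, h1⟩
  have hcont : ContinuousOn (CBS k) (Icc a b) :=
    (CBS_continuousOn k).mono (fun x hx => lt_of_lt_of_le ha0 hx.1)
  have := intermediate_value_Icc hab.le hcont
  have hmem : c ∈ Icc (CBS k a) (CBS k b) := ⟨hac.le, hbc.le⟩
  obtain ⟨y, hy, hyc⟩ := this hmem
  exact ⟨y, lt_of_lt_of_le ha0 hy.1, hyc⟩

lemma YBS_spec {k c : ℝ} (hk : 0 < k) (hc0 : 0 < c) (hc1 : c < 1) :
    0 < YBS k c ∧ CBS k (YBS k c) = c := by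
  obtain ⟨y, hy, rfl⟩ := YBS_exists hk hc0 hc1
  rw [YBS_CBS hk hy]
  exact ⟨hy, rfl⟩

lemma YBS_lt {k u b : ℝ} (hk : 0 < k) (hu0 : 0 < u) (hu1 : u < 1) (hb : 0 < b)
    (h : u < CBS k b) : YBS k u < b := by
  obtain ⟨hy, hcy⟩ := YBS_spec hk hu0 hu1
  by_contra hle
  push_neg at hle
  have := (CBS_strictMonoOn k).monotoneOn (mem_Ioi.2 hb) (mem_Ioi.2 hy) hle
  rw [hcy] at this
  linarith

lemma lt_YBS {k u b : ℝ} (hk : 0 < k) (hu0 : 0 < u) (hu1 : u < 1) (hb : 0 < b)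
    (h : CBS k b < u) : b < YBS k u := by
  obtain ⟨hy, hcy⟩ := YBS_spec hk hu0 hu1
  by_contra hle
  push_neg at hle
  have := (CBS_strictMonoOn k).monotoneOn (mem_Ioi.2 hy) (mem_Ioi.2 hb) hle
  rw [hcy] at this
  linarith

lemma YBS_continuousAt {k c : ℝ} (hk : 0 < k) (hc0 : 0 < c) (hc1 : c < 1) :
    ContinuousAt (YBS k) c := by
  obtain ⟨hy, hcy⟩ := YBS_spec hk hc0 hc1
  rw [ContinuousAt]
  refine tendsto_order.2 ⟨?_, ?_⟩
  · intro b hb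
    set b' := (max b 0 + YBS k c) / 2 with hb'def
    have hmax0 : 0 ≤ max b 0 := le_max_right _ _
    have hmaxy : max b 0 < YBS k c := max_lt hb hy
    have hb'pos : 0 < b' := by rw [hb'def]; linarith
    have hb'lt : b' < YBS k c := by rw [hb'def]; linarith
    have hbb' : b < b' := by
      have := le_max_left b 0
      rw [hb'def]; linarith
    have hCb' : CBS k b' < c := by
      rw [← hcy]
      exact CBS_strictMonoOn k (mem_Ioi.2 hb'pos) (mem_Ioi.2 hy) hb'lt
    filter_upwards [isOpen_Ioo.mem_nhds (⟨hCb', hc1⟩ : c ∈ Ioo (CBS k b') 1)] with u hu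
    have hu0' : 0 < u := lt_trans (CBS_pos hk hb'pos) hu.1
    exact lt_trans hbb' (lt_YBS hk hu0' hu.2 hb'pos hu.1)
  · intro b hb
    have hbpos : 0 < b := lt_trans hy hb
    have hCb : c < CBS k b := by
      rw [← hcy]
      exact CBS_strictMonoOn k (mem_Ioi.2 hy) (mem_Ioi.2 hbpos) hb
    filter_upwards [isOpen_Ioo.mem_nhds (⟨hc0, hCb⟩ : c ∈ Ioo 0 (CBS k b))] with u hu
    exact YBS_lt hk hu.1 (lt_trans hu.2 (CBS_lt_one hk hbpos)) hbpos hu.2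

lemma YBS_hasDerivAt {k c : ℝ} (hk : 0 < k) (hc0 : 0 < c) (hc1 : c < 1) :
    HasDerivAt (YBS k) (phi (-k / YBS k c + YBS k c / 2))⁻¹ c := by
  obtain ⟨hy, hcy⟩ := YBS_spec hk hc0 hc1
  have hf : HasDerivAt (CBS k) (phi (-k / YBS k c + YBS k c / 2)) (YBS k c) :=
    CBS_hasDerivAt hy
  refine HasDerivAt.of_local_left_inverse (YBS_continuousAt hk hc0 hc1) hf
    (ne_of_gt (phi_pos _)) ?_
  filter_upwards [isOpen_Ioo.mem_nhds (⟨hc0, hc1⟩ : c ∈ Ioo 0 1)] with u hu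
  exact (YBS_spec hk hu.1 hu.2).2

lemma YBS_tendsto_zero {k : ℝ} (hk : 0 < k) :
    Tendsto (YBS k) (𝓝[>] (0:ℝ)) (𝓝[>] (0:ℝ)) := by
  refine tendsto_nhdsWithin_iff.2 ⟨?_, ?_⟩
  · refine tendsto_order.2 ⟨?_, ?_⟩
    · intro b hb
      filter_upwards [Ioo_mem_nhdsGT_of_mem (left_mem_Ico.2 one_pos)] with u hu
      exact lt_of_lt_of_le hb ((YBS_spec hk hu.1 hu.2).1.le)
    · intro b hb
      have hCb : 0 < CBS k b := CBS_pos hk hb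
      filter_upwards [Ioo_mem_nhdsGT_of_mem (left_mem_Ico.2 hCb)] with u hu
      exact YBS_lt hk hu.1 (lt_trans hu.2 (CBS_lt_one hk hb)) hb hu.2
  · filter_upwards [Ioo_mem_nhdsGT_of_mem (left_mem_Ico.2 one_pos)] with u hu
    exact mem_Ioi.2 (YBS_spec hk hu.1 hu.2).1

lemma g_hasDerivAt {k c : ℝ} (hk : 0 < k) (hc0 : 0 < c) (hc1 : c < 1) :
    HasDerivAt (fun u => CBS k (2 * k / YBS k u)) (-(2 * k / (YBS k c) ^ 2)) c := by
  obtain ⟨hy, hcy⟩ := YBS_spec hk hc0 hc1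
  have hz : 0 < 2 * k / YBS k c := by positivity
  have hY := YBS_hasDerivAt hk hc0 hc1
  have hquot : HasDerivAt (fun u => 2 * k / YBS k u)
      (-(2 * k * (phi (-k / YBS k c + YBS k c / 2))⁻¹) / (YBS k c) ^ 2) c := by
    have := (hasDerivAt_const c (2 * k)).div hY (ne_of_gt hy)
    exact this.congr_deriv (by ring)
  have hC : HasDerivAt (CBS k)
      (phi (-k / (2 * k / YBS k c) + (2 * k / YBS k c) / 2)) (2 * k / YBS k c) :=
    CBS_hasDerivAt hz
  have hcomp := hC.comp c hquot
  have harg : -k / (2 * k / YBS k c) + (2 * k / YBS k c) / 2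
      = -(-k / YBS k c + YBS k c / 2) := by
    field_simp
    ring
  have hval : phi (-k / (2 * k / YBS k c) + (2 * k / YBS k c) / 2) *
      (-(2 * k * (phi (-k / YBS k c + YBS k c / 2))⁻¹) / (YBS k c) ^ 2)
      = -(2 * k / (YBS k c) ^ 2) := by
    rw [harg, phi_neg]
    have hY0 : YBS k c ≠ 0 := ne_of_gt hy
    set p := phi (-k / YBS k c + YBS k c / 2) with hpdef
    have hp0 : p ≠ 0 := ne_of_gt (phi_pos _)
    field_simp
  rw [hval] at hcomp
  simpa [Function.comp_def] using hcomp

theorem stmt_5_aux (k c : ℝ) (hk : 0 < k) (hc0 : 0 < c) (hc1 : c < 1) :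
    0 < 1 - ∫ u in (0:ℝ)..c, 2 * k / (YBS k u) ^ 2 ∧
    YBS k c = 2 * k / YBS k (1 - ∫ u in (0:ℝ)..c, 2 * k / (YBS k u) ^ 2) := by
  obtain ⟨hy, hcy⟩ := YBS_spec hk hc0 hc1
  set g : ℝ → ℝ := fun u => CBS k (2 * k / YBS k u) with hgdef
  have hcontand : ∀ u ∈ Ioo (0:ℝ) 1, ContinuousAt (fun u => 2 * k / (YBS k u) ^ 2) u := by
    intro u hu
    have hc := YBS_continuousAt hk hu.1 hu.2
    have hYu : YBS k u ≠ 0 := ne_of_gt (YBS_spec hk hu.1 hu.2).1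
    exact continuousAt_const.div (hc.pow 2) (pow_ne_zero 2 hYu)
  have key : ∀ a, 0 < a → a ≤ c →
      (∫ u in a..c, 2 * k / (YBS k u) ^ 2) = g a - g c := by
    intro a ha0 hac
    have hsub : Icc a c ⊆ Ioo 0 1 := fun x hx =>
      ⟨lt_of_lt_of_le ha0 hx.1, lt_of_le_of_lt hx.2 hc1⟩
    have hderiv : ∀ u ∈ uIcc a c,
        HasDerivAt (fun u => -(g u)) (2 * k / (YBS k u) ^ 2) u := by
      intro u hu
      rw [uIcc_of_le hac] at hu
      have hu' := hsub hu
      simpa [Pi.neg_def] using (g_hasDerivAt hk hu'.1 hu'.2).neg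
    have hint : IntervalIntegrable (fun u => 2 * k / (YBS k u) ^ 2) volume a c := by
      apply ContinuousOn.intervalIntegrable
      intro u hu
      rw [uIcc_of_le hac] at hu
      exact (hcontand u (hsub hu)).continuousWithinAt
    rw [intervalIntegral.integral_eq_sub_of_hasDerivAt hderiv hint]
    ring
  have hgbound : ∀ u, 0 < u → u < 1 → 0 < g u ∧ g u < 1 := by
    intro u h1 h2
    have hYu : 0 < YBS k u := (YBS_spec hk h1 h2).1
    have hz : 0 < 2 * k / YBS k u := by positivity
    exact ⟨CBS_pos hk hz, CBS_lt_one hk hz⟩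
  set a : ℕ → ℝ := fun n => c / (n + 2) with hadef
  have ha_pos : ∀ n, 0 < a n := fun n => by positivity
  have ha_le : ∀ n, a n ≤ c := by
    intro n
    rw [hadef]
    rw [div_le_iff₀ (by positivity)]
    nlinarith [Nat.cast_nonneg (α := ℝ) n]
  have ha_lim : Tendsto a atTop (𝓝 (0:ℝ)) := by
    have hden : Tendsto (fun n : ℕ => ((n:ℝ) + 2)) atTop atTop :=
      tendsto_natCast_atTop_atTop.atTop_add tendsto_const_nhds
    exact tendsto_const_nhds.div_atTop hden
  have ha_tendsto : Tendsto a atTop (𝓝[>] (0:ℝ)) :=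
    tendsto_nhdsWithin_iff.2 ⟨ha_lim, Eventually.of_forall fun n => ha_pos n⟩
  have hga : Tendsto (fun n => g (a n)) atTop (𝓝 1) := by
    have hYt : Tendsto (fun n => YBS k (a n)) atTop (𝓝[>] (0:ℝ)) :=
      (YBS_tendsto_zero hk).comp ha_tendsto
    have hinv : Tendsto (fun n => (YBS k (a n))⁻¹) atTop atTop :=
      tendsto_inv_nhdsGT_zero.comp hYt
    have hz : Tendsto (fun n => 2 * k * (YBS k (a n))⁻¹) atTop atTop :=
      hinv.const_mul_atTop (by positivity)
    have hz' : Tendsto (fun n => 2 * k / YBS k (a n)) atTop atTop :=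
      hz.congr fun n => (div_eq_mul_inv _ _).symm
    exact (CBS_tendsto_one hk).comp hz'
  have hnonneg : ∀ u, 0 < u → u < 1 → 0 ≤ 2 * k / (YBS k u) ^ 2 := by
    intro u h1 h2
    have := (YBS_spec hk h1 h2).1
    positivity
  have hfi : ∀ n, IntegrableOn (fun u => 2 * k / (YBS k u) ^ 2) (Ioc (a n) c) := by
    intro n
    have hco : ContinuousOn (fun u => 2 * k / (YBS k u) ^ 2) (Icc (a n) c) := fun u hu =>
      (hcontand u ⟨lt_of_lt_of_le (ha_pos n) hu.1, lt_of_le_of_lt hu.2 hc1⟩).continuousWithinAt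
    exact (hco.integrableOn_Icc).mono_set Ioc_subset_Icc_self
  have hIocInt : ∀ n, (∫ u in Ioc (a n) c, 2 * k / (YBS k u) ^ 2) = g (a n) - g c := by
    intro n
    rw [← intervalIntegral.integral_of_le (ha_le n)]
    exact key (a n) (ha_pos n) (ha_le n)
  have hbound : ∀ n, (∫ u in Ioc (a n) c, ‖2 * k / (YBS k u) ^ 2‖) ≤ 1 := by
    intro n
    have heq : ∀ u ∈ Ioc (a n) c, ‖2 * k / (YBS k u) ^ 2‖ = 2 * k / (YBS k u) ^ 2 := by
      intro u hu
      exact Real.norm_of_nonneg (hnonneg u (lt_of_lt_of_le (ha_pos n) hu.1.le)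
        (lt_of_le_of_lt hu.2 hc1))
    rw [setIntegral_congr_fun measurableSet_Ioc heq, hIocInt n]
    have h1 := hgbound (a n) (ha_pos n) (lt_of_le_of_lt (ha_le n) hc1)
    have h2 := hgbound c hc0 hc1
    linarith [h1.2, h2.1]
  have hIoc : IntegrableOn (fun u => 2 * k / (YBS k u) ^ 2) (Ioc 0 c) :=
    integrableOn_Ioc_of_intervalIntegral_norm_bounded_left hfi ha_lim
      (Eventually.of_forall hbound)
  have hlim : Tendsto (fun n => ∫ u in Ioc (a n) c, 2 * k / (YBS k u) ^ 2) atTop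
      (𝓝 (∫ u in Ioc 0 c, 2 * k / (YBS k u) ^ 2)) := by
    have hcov : AECover (volume.restrict (Ioc 0 c)) atTop (fun n => Ioc (a n) c) :=
      aecover_Ioc_of_Ioc ha_lim tendsto_const_nhds
    have ht := hcov.integral_tendsto_of_countably_generated hIoc
    refine ht.congr fun n => ?_
    rw [Measure.restrict_restrict measurableSet_Ioc,
      inter_eq_self_of_subset_left (Ioc_subset_Ioc_left (ha_pos n).le)]
  have hlim2 : Tendsto (fun n => ∫ u in Ioc (a n) c, 2 * k / (YBS k u) ^ 2) atTop
      (𝓝 (1 - g c)) := by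
    refine (hga.sub_const (g c)).congr fun n => (hIocInt n).symm
  have hint_eq : (∫ u in (0:ℝ)..c, 2 * k / (YBS k u) ^ 2) = 1 - g c := by
    rw [intervalIntegral.integral_of_le hc0.le]
    exact tendsto_nhds_unique hlim hlim2
  have hgc := hgbound c hc0 hc1
  constructor
  · rw [hint_eq]; linarith [hgc.1]
  · rw [hint_eq]
    have h1 : (1:ℝ) - (1 - g c) = g c := by ring
    rw [h1]
    have hz : 0 < 2 * k / YBS k c := by positivity
    have h2 : YBS k (g c) = 2 * k / YBS k c := YBS_CBS hk hz
    rw [h2]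
    rw [eq_div_iff (ne_of_gt (by positivity : (0:ℝ) < 2 * k / YBS k c))]
    field_simp

theorem stmt_5 (k c : ℝ) (hk : 0 < k) (hc0 : 0 < c) (hc1 : c < 1) :
    0 < 1 - ∫ u in (0:ℝ)..c, 2 * k / (YBS k u) ^ 2 ∧
    YBS k c = 2 * k / YBS k (1 - ∫ u in (0:ℝ)..c, 2 * k / (YBS k u) ^ 2) :=
  stmt_5_aux k c hk hc0 hc1
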